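/- (Chernoff's √n lemma) Let C be a contraction on a Hilbert space ℋ (‖C‖ ≤ 1). Then for every n ≥ 1 and g ∈ ℋ, ‖Cⁿg − e^{−n(I−C)}g‖ ≤ √n · ‖(I − C)g‖. -/

import Mathlib

open Nat NormedSpace

section ChernoffAux

lemma chernoff_pois0 (x : ℝ) : Summable (fun k : ℕ => x ^ k / k !) :=
  expSeries_div_summable x

lemma chernoff_pois0' (x : ℝ) : ∑' k : ℕ, x ^ k / k ! = Real.exp x := by
  rw [Real.exp_eq_exp_ℝ, exp_eq_tsum_div]

lemma chernoff_shift1 (x : ℝ) (k : ℕ) :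
    ((k:ℝ)+1) * x ^ (k+1) / (k+1)! = x * (x ^ k / k !) := by
  rw [Nat.factorial_succ]
  push_cast
  have h1 : ((k:ℝ)+1) ≠ 0 := by positivity
  have h2 : ((k !:ℕ):ℝ) ≠ 0 := by exact_mod_cast (Nat.factorial_pos k).ne'
  field_simp
  ring

lemma chernoff_pois1_sum : ∀ x : ℝ, Summable (fun k : ℕ => (k:ℝ) * x ^ k / k !) := by
  intro x
  rw [← summable_nat_add_iff 1]
  have : (fun k : ℕ => ((k:ℝ)+1) * x ^ (k+1) / (k+1)!) = fun k => x * (x ^ k / k !) := by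
    funext k; exact chernoff_shift1 x k
  simpa [this] using (chernoff_pois0 x).mul_left x

lemma chernoff_pois1 (x : ℝ) : ∑' k : ℕ, (k:ℝ) * x ^ k / k ! = x * Real.exp x := by
  rw [Summable.tsum_eq_zero_add (chernoff_pois1_sum x)]
  simp only [Nat.cast_zero, zero_mul, zero_div, zero_add]
  rw [show (fun k : ℕ => ((k+1:ℕ):ℝ) * x ^ (k+1) / (k+1)!) = fun k => x * (x ^ k / k !) by
    funext k; push_cast; exact chernoff_shift1 x k]
  rw [tsum_mul_left, chernoff_pois0']

lemma chernoff_shift2 (x : ℝ) (k : ℕ) :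
    ((k+1:ℕ):ℝ) * (((k+1:ℕ):ℝ) - 1) * x ^ (k+1) / (k+1)! = x * ((k:ℝ) * x ^ k / k !) := by
  rw [Nat.factorial_succ]
  have h1 : ((k:ℝ)+1) ≠ 0 := by positivity
  have h2 : ((k !:ℕ):ℝ) ≠ 0 := by exact_mod_cast (Nat.factorial_pos k).ne'
  push_cast
  field_simp
  ring

lemma chernoff_pois2_sum (x : ℝ) :
    Summable (fun k : ℕ => (k:ℝ) * ((k:ℝ) - 1) * x ^ k / k !) := by
  rw [← summable_nat_add_iff 1]
  exact ((chernoff_pois1_sum x).mul_left x).congr fun k => (chernoff_shift2 x k).symm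

lemma chernoff_pois2 (x : ℝ) :
    ∑' k : ℕ, (k:ℝ) * ((k:ℝ) - 1) * x ^ k / k ! = x ^ 2 * Real.exp x := by
  rw [Summable.tsum_eq_zero_add (chernoff_pois2_sum x)]
  simp only [Nat.cast_zero, zero_mul, zero_div, zero_add]
  rw [tsum_congr (fun k : ℕ => chernoff_shift2 x k), tsum_mul_left, chernoff_pois1]
  ring

lemma chernoff_poisVar (x : ℝ) :
    Summable (fun k : ℕ => ((k:ℝ) - x)^2 * x ^ k / k !) ∧
    ∑' k : ℕ, ((k:ℝ) - x)^2 * x ^ k / k ! = x * Real.exp x := by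
  have hfun : ∀ k : ℕ, ((k:ℝ) - x)^2 * x ^ k / k !
      = ((k:ℝ) * ((k:ℝ) - 1) * x ^ k / k !) + ((1 - 2*x) * ((k:ℝ) * x ^ k / k !)
        + x^2 * (x ^ k / k !)) := by
    intro k
    have h2 : ((k !:ℕ):ℝ) ≠ 0 := by exact_mod_cast (Nat.factorial_pos k).ne'
    field_simp
    ring
  have hs2 : Summable (fun k : ℕ => (1 - 2*x) * ((k:ℝ) * x ^ k / k !)
      + x^2 * (x ^ k / k !)) :=
    ((chernoff_pois1_sum x).mul_left _).add ((chernoff_pois0 x).mul_left _)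
  constructor
  · exact ((chernoff_pois2_sum x).add hs2).congr fun k => (hfun k).symm
  · rw [tsum_congr hfun, Summable.tsum_add (chernoff_pois2_sum x) hs2,
      Summable.tsum_add ((chernoff_pois1_sum x).mul_left _) ((chernoff_pois0 x).mul_left _),
      tsum_mul_left, tsum_mul_left, chernoff_pois2, chernoff_pois1, chernoff_pois0']
    ring

lemma chernoff_pois_total (x : ℝ) :
    ∑' k : ℕ, Real.exp (-x) * (x ^ k / k !) = 1 := by
  rw [tsum_mul_left, chernoff_pois0', ← Real.exp_add]; simp

lemma chernoff_pois_abs (x : ℝ) (hx : 0 ≤ x) :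
    Summable (fun k : ℕ => Real.exp (-x) * (x ^ k / k !) * |(k:ℝ) - x|) ∧
    ∑' k : ℕ, Real.exp (-x) * (x ^ k / k !) * |(k:ℝ) - x| ≤ Real.sqrt x := by
  set f : ℕ → ℝ := fun k => Real.exp (-x) * (x ^ k / k !) with hf
  set g : ℕ → ℝ := fun k => Real.exp (-x) * (((k:ℝ) - x)^2 * x ^ k / k !) with hg
  have hf0 : ∀ k, 0 ≤ f k := fun k => by positivity
  have hg0 : ∀ k, 0 ≤ g k := fun k => by positivity
  have hfs : Summable f := (chernoff_pois0 x).mul_left _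
  have hgs : Summable g := (chernoff_poisVar x).1.mul_left _
  have hft : ∑' k, f k = 1 := chernoff_pois_total x
  have hgt : ∑' k, g k = x := by
    rw [hg, tsum_mul_left, (chernoff_poisVar x).2, Real.exp_neg]
    rw [mul_comm x (Real.exp x), ← mul_assoc, inv_mul_cancel₀ (Real.exp_ne_zero x), one_mul]
  have key : ∀ k : ℕ, f k * |(k:ℝ) - x| = Real.sqrt (f k) * Real.sqrt (g k) := by
    intro k
    rw [← Real.sqrt_mul (hf0 k)]
    have : f k * g k = (f k * |(k:ℝ) - x|)^2 := by
      rw [mul_pow, sq_abs]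
      simp only [hf, hg]
      ring
    rw [this, Real.sqrt_sq (by positivity)]
  have hsum : Summable (fun k : ℕ => f k * |(k:ℝ) - x|) := by
    apply Summable.of_nonneg_of_le (fun k => by positivity) (fun k => ?_) (hgs.add hfs)
    have habs : |(k:ℝ) - x| ≤ ((k:ℝ) - x)^2 + 1 := by
      rcases le_or_gt (|(k:ℝ) - x|) 1 with h | h
      · nlinarith [sq_nonneg ((k:ℝ) - x)]
      · nlinarith [sq_abs ((k:ℝ) - x), abs_nonneg ((k:ℝ) - x)]
    calc f k * |(k:ℝ) - x| ≤ f k * (((k:ℝ) - x)^2 + 1) :=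
          mul_le_mul_of_nonneg_left habs (hf0 k)
      _ = g k + f k := by rw [hf, hg]; ring
  refine ⟨hsum, Summable.tsum_le_of_sum_le hsum fun s => ?_⟩
  calc ∑ k ∈ s, f k * |(k:ℝ) - x| = ∑ k ∈ s, Real.sqrt (f k) * Real.sqrt (g k) :=
        Finset.sum_congr rfl fun k _ => key k
    _ ≤ Real.sqrt (∑ k ∈ s, f k) * Real.sqrt (∑ k ∈ s, g k) :=
        Real.sum_sqrt_mul_sqrt_le s hf0 hg0
    _ ≤ Real.sqrt 1 * Real.sqrt x := by
        gcongr
        · exact hft ▸ Summable.sum_le_tsum s (fun k _ => hf0 k) hfs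
        · exact hgt ▸ Summable.sum_le_tsum s (fun k _ => hg0 k) hgs
    _ = Real.sqrt x := by simp

variable {ℋ : Type*} [NormedAddCommGroup ℋ] [InnerProductSpace ℂ ℋ] [CompleteSpace ℋ]

omit [CompleteSpace ℋ] in
lemma chernoff_pow_apply_norm_le (C : ℋ →L[ℂ] ℋ) (hC : ‖C‖ ≤ 1) (p : ℕ) (v : ℋ) :
    ‖(C ^ p) v‖ ≤ ‖v‖ := by
  induction p with
  | zero => simp
  | succ p ih =>
      rw [show p + 1 = 1 + p from add_comm p 1, pow_add, pow_one]
      calc ‖(C * C ^ p) v‖ = ‖C ((C ^ p) v)‖ := rfl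
        _ ≤ ‖C‖ * ‖(C ^ p) v‖ := C.le_opNorm _
        _ ≤ 1 * ‖v‖ := mul_le_mul hC ih (norm_nonneg _) zero_le_one
        _ = ‖v‖ := one_mul _

omit [CompleteSpace ℋ] in
lemma chernoff_pow_sub_pow_bound (C : ℋ →L[ℂ] ℋ) (hC : ‖C‖ ≤ 1) (g : ℋ) (j m : ℕ) :
    ‖(C ^ j) g - (C ^ (j + m)) g‖ ≤ m * ‖(1 - C) g‖ := by
  induction m with
  | zero => simp
  | succ m ih =>
      have step : ‖(C ^ (j + m)) g - (C ^ (j + m + 1)) g‖ ≤ ‖(1 - C) g‖ := by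
        have : (C ^ (j + m)) g - (C ^ (j + m + 1)) g = (C ^ (j + m)) ((1 - C) g) := by
          simp [pow_succ, ContinuousLinearMap.sub_apply, map_sub]
        rw [this]
        exact chernoff_pow_apply_norm_le C hC _ _
      calc ‖(C ^ j) g - (C ^ (j + (m+1))) g‖
          ≤ ‖(C ^ j) g - (C ^ (j + m)) g‖ + ‖(C ^ (j + m)) g - (C ^ (j + m + 1)) g‖ := by
            rw [show j + (m+1) = j + m + 1 by ring]
            exact norm_sub_le_norm_sub_add_norm_sub _ _ _
        _ ≤ m * ‖(1 - C) g‖ + ‖(1 - C) g‖ := add_le_add ih step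
        _ = (m + 1 : ℕ) * ‖(1 - C) g‖ := by push_cast; ring

omit [CompleteSpace ℋ] in
lemma chernoff_pow_sub_pow_abs (C : ℋ →L[ℂ] ℋ) (hC : ‖C‖ ≤ 1) (g : ℋ) (j k : ℕ) :
    ‖(C ^ j) g - (C ^ k) g‖ ≤ |(j:ℝ) - k| * ‖(1 - C) g‖ := by
  rcases le_total j k with h | h
  · obtain ⟨m, rfl⟩ := Nat.exists_eq_add_of_le h
    calc ‖(C ^ j) g - (C ^ (j + m)) g‖ ≤ m * ‖(1 - C) g‖ :=
          chernoff_pow_sub_pow_bound C hC g j m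
      _ = |(j:ℝ) - (j + m : ℕ)| * ‖(1 - C) g‖ := by
          congr 1; push_cast; rw [abs_sub_comm]; simp [abs_of_nonneg]
  · obtain ⟨m, rfl⟩ := Nat.exists_eq_add_of_le h
    rw [norm_sub_rev]
    calc ‖(C ^ k) g - (C ^ (k + m)) g‖ ≤ m * ‖(1 - C) g‖ :=
          chernoff_pow_sub_pow_bound C hC g k m
      _ = |((k + m : ℕ):ℝ) - k| * ‖(1 - C) g‖ := by
          congr 1; push_cast; simp [abs_of_nonneg]

lemma chernoff_exp_apply_eq (C : ℋ →L[ℂ] ℋ) (n : ℕ) (g : ℋ) :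
    exp ((n : ℂ) • (C - 1)) g
      = ∑' k : ℕ, (Real.exp (-(n:ℝ)) * ((n:ℝ) ^ k / k !)) • ((C ^ k) g) := by
  have hsplit : (n : ℂ) • (C - 1) = (n : ℂ) • C + (-(n:ℂ)) • (1 : ℋ →L[ℂ] ℋ) := by
    rw [smul_sub]; module
  have hcomm : Commute ((n : ℂ) • C) ((-(n:ℂ)) • (1 : ℋ →L[ℂ] ℋ)) :=
    ((Commute.one_right C).smul_right _).smul_left _
  let +nondep : NormedAlgebra ℚ (ℋ →L[ℂ] ℋ) := .restrictScalars ℚ ℂ _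
  rw [hsplit, exp_add_of_commute hcomm]
  have hB : exp ((-(n:ℂ)) • (1 : ℋ →L[ℂ] ℋ)) = Complex.exp (-(n:ℂ)) • (1 : ℋ →L[ℂ] ℋ) := by
    rw [← Algebra.algebraMap_eq_smul_one, ← algebraMap_exp_comm,
      ← Complex.exp_eq_exp_ℂ, Algebra.algebraMap_eq_smul_one]
  rw [hB]
  have happly : (exp ((n : ℂ) • C) * (Complex.exp (-(n:ℂ)) • 1)) g
      = Complex.exp (-(n:ℂ)) • (exp ((n : ℂ) • C)) g := by
    simp [ContinuousLinearMap.mul_apply, map_smul]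
  rw [happly]
  have hseries : HasSum (fun k : ℕ => (((k !)⁻¹ : ℂ) • ((n:ℂ) • C) ^ k) g)
      ((exp ((n : ℂ) • C)) g) :=
    (exp_series_hasSum_exp' (𝕂 := ℂ) ((n:ℂ) • C)).map
      (ContinuousLinearMap.apply ℂ ℋ g) (ContinuousLinearMap.apply ℂ ℋ g).continuous
  have hterm : ∀ k : ℕ, Complex.exp (-(n:ℂ)) • ((((k !)⁻¹ : ℂ) • ((n:ℂ) • C) ^ k) g)
      = (Real.exp (-(n:ℝ)) * ((n:ℝ) ^ k / k !)) • ((C ^ k) g) := by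
    intro k
    rw [smul_pow, ContinuousLinearMap.smul_apply, ContinuousLinearMap.smul_apply, smul_smul,
      smul_smul, ← Complex.coe_smul]
    congr 1
    rw [show (-(n:ℂ)) = ((-(n:ℝ):ℝ):ℂ) by push_cast; ring, ← Complex.ofReal_exp]
    push_cast
    ring
  have final := (hseries.const_smul (Complex.exp (-(n:ℂ)))).tsum_eq
  rw [← final]
  exact tsum_congr hterm

end ChernoffAux

/-- Chernoff's √n lemma: for a contraction `C` on a complex Hilbert space,
`‖Cⁿg − e^{−n(I−C)}g‖ ≤ √n ‖(I − C)g‖` for every `n ≥ 1` and `g`. -/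
theorem chernoff_sqrt_lemma
    {ℋ : Type*} [NormedAddCommGroup ℋ] [InnerProductSpace ℂ ℋ] [CompleteSpace ℋ]
    (C : ℋ →L[ℂ] ℋ) (hC : ‖C‖ ≤ 1) (n : ℕ) (hn : 1 ≤ n) (g : ℋ) :
    ‖(C ^ n) g - NormedSpace.exp ((n : ℂ) • (C - 1)) g‖ ≤ Real.sqrt n * ‖(1 - C) g‖ := by
  set x : ℝ := (n : ℝ) with hxdef
  have hx : 0 ≤ x := Nat.cast_nonneg n
  set p : ℕ → ℝ := fun k => Real.exp (-x) * (x ^ k / k !) with hp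
  have hp0 : ∀ k, 0 ≤ p k := fun k => by positivity
  -- bound on each term
  have hbound : ∀ k : ℕ, ‖p k • ((C ^ n) g - (C ^ k) g)‖
      ≤ p k * |(k:ℝ) - x| * ‖(1 - C) g‖ := by
    intro k
    rw [norm_smul, Real.norm_eq_abs, abs_of_nonneg (hp0 k),
      mul_assoc (p k) |(k:ℝ) - x| ‖(1 - C) g‖]
    refine mul_le_mul_of_nonneg_left ?_ (hp0 k)
    rw [norm_sub_rev]
    exact chernoff_pow_sub_pow_abs C hC g k n
  have habs := chernoff_pois_abs x hx
  have hmaj : Summable (fun k : ℕ => p k * |(k:ℝ) - x| * ‖(1 - C) g‖) :=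
    habs.1.mul_right _
  have hnorms : Summable (fun k : ℕ => ‖p k • ((C ^ n) g - (C ^ k) g)‖) :=
    Summable.of_nonneg_of_le (fun k => norm_nonneg _) hbound hmaj
  have hv : Summable (fun k : ℕ => p k • ((C ^ n) g - (C ^ k) g)) := hnorms.of_norm
  have hps : Summable p := (chernoff_pois0 x).mul_left _
  have hvk : Summable (fun k : ℕ => p k • ((C ^ k) g)) := by
    apply Summable.of_norm
    refine Summable.of_nonneg_of_le (fun k => norm_nonneg _) (fun k => ?_) (hps.mul_right ‖g‖)
    rw [norm_smul, Real.norm_eq_abs, abs_of_nonneg (hp0 k)]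
    exact mul_le_mul_of_nonneg_left (chernoff_pow_apply_norm_le C hC k g) (hp0 k)
  have hvn : Summable (fun k : ℕ => p k • ((C ^ n) g)) := hps.smul_const _
  -- the key identity
  have hid : (C ^ n) g - NormedSpace.exp ((n : ℂ) • (C - 1)) g
      = ∑' k : ℕ, p k • ((C ^ n) g - (C ^ k) g) := by
    have h1 : ∑' k : ℕ, p k • ((C ^ n) g - (C ^ k) g)
        = (∑' k : ℕ, p k • ((C ^ n) g)) - ∑' k : ℕ, p k • ((C ^ k) g) := by
      rw [← Summable.tsum_sub hvn hvk]
      exact tsum_congr fun k => smul_sub _ _ _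
    rw [h1, hps.tsum_smul_const, chernoff_pois_total x, one_smul,
      chernoff_exp_apply_eq C n g]
  rw [hid]
  calc ‖∑' k : ℕ, p k • ((C ^ n) g - (C ^ k) g)‖
      ≤ ∑' k : ℕ, ‖p k • ((C ^ n) g - (C ^ k) g)‖ := norm_tsum_le_tsum_norm hnorms
    _ ≤ ∑' k : ℕ, p k * |(k:ℝ) - x| * ‖(1 - C) g‖ := Summable.tsum_le_tsum hbound hnorms hmaj
    _ = (∑' k : ℕ, p k * |(k:ℝ) - x|) * ‖(1 - C) g‖ := tsum_mul_right
    _ ≤ Real.sqrt x * ‖(1 - C) g‖ := by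
        gcongr
        exact habs.2
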